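/- For every p ∈ (0,1] there exists a constant C > 0, depending only on p, with the following property. Let d ≥ 1, α > 0, R₀ ∈ (0, 1/2], and let K₁ : ℝ → ℝ be a 1-periodic even function with K₁(0) = 1, |K₁(t)| ≤ 1 for all t, and K₁(t) ≥ 1 − α · d_𝕋(t)^p whenever d_𝕋(t) ≤ R₀, where d_𝕋(t) := min_{k∈ℤ} |t − k| is the distance on the torus. Define on [0,1)^d the pseudometric ρ(x,y) := √( 2 − 2 ∏_{j=1}^d K₁(x_j − y_j) ) and let μ be the uniform probability measure on [0,1)^d. Then ∫₀^∞ sup_{x∈[0,1)^d} √( log( 1 / μ{ y : ρ(x,y) ≤ r } ) ) dr ≤ C · √( d·(1 + log d) ) · ( 1 + √α + √( −log(2R₀) ) ). -/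

import Mathlib

open MeasureTheory ProbabilityTheory
open scoped ENNReal NNReal

/-- Distance to the nearest integer: the metric `d_𝕋` on the torus `𝕋 = ℝ/ℤ`,
evaluated at a difference `t`. -/
noncomputable def torusDist (t : ℝ) : ℝ := ⨅ k : ℤ, |t - (k : ℝ)|

/-- The uniform probability measure on `[0,1)^d`. -/
noncomputable def cubeMeasure (d : ℕ) : Measure (Fin d → ℝ) :=
  Measure.pi fun _ => volume.restrict (Set.Ico (0 : ℝ) 1)

set_option maxHeartbeats 1000000

lemma torusDist_nonneg (t : ℝ) : 0 ≤ torusDist t := le_ciInf fun _ => abs_nonneg _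

lemma torusDist_le_abs (t : ℝ) : torusDist t ≤ |t| := by
  have h0 : |t - ((0:ℤ):ℝ)| = |t| := by norm_num
  exact h0 ▸ ciInf_le ⟨0, by rintro y ⟨k, rfl⟩; positivity⟩ (0:ℤ)

lemma cubeMeasure_univ (d : ℕ) : cubeMeasure d Set.univ = 1 := by
  rw [cubeMeasure, ← Set.pi_univ Set.univ, Measure.pi_pi]
  simp

lemma my_le_sq_sqrt (a : ℝ) : a ≤ Real.sqrt a ^ 2 := by
  rcases le_or_gt 0 a with h|h
  · rw [Real.sq_sqrt h]
  · calc a ≤ 0 := h.le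
      _ ≤ _ := sq_nonneg _

lemma my_sqrt_add_le (a b : ℝ) : Real.sqrt (a + b) ≤ Real.sqrt a + Real.sqrt b := by
  rw [show Real.sqrt a + Real.sqrt b = Real.sqrt ((Real.sqrt a + Real.sqrt b)^2) from
    (Real.sqrt_sq (by positivity)).symm]
  apply Real.sqrt_le_sqrt
  nlinarith [my_le_sq_sqrt a, my_le_sq_sqrt b, Real.sqrt_nonneg a, Real.sqrt_nonneg b]

lemma ball_measure_lb (d : ℕ) (hd : 1 ≤ d) (p α R₀ : ℝ) (hp : 0 < p)
    (hα : 0 < α) (hR : 0 < R₀) (hR2 : R₀ ≤ 1/2)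
    (K₁ : ℝ → ℝ)
    (hKlb : ∀ t, torusDist t ≤ R₀ → 1 - α * torusDist t ^ p ≤ K₁ t)
    (x : Fin d → ℝ) (hx : x ∈ Set.univ.pi fun _ : Fin d => Set.Ico (0:ℝ) 1)
    (r : ℝ) (δ : ℝ) (hδR : δ ≤ R₀) (hδ0 : 0 < δ)
    (hδr : 2 * d * (α * δ ^ p) ≤ min (r^2) 2) (hr : 0 ≤ r) :
    ENNReal.ofReal δ ^ d ≤
      cubeMeasure d {y | Real.sqrt (2 - 2 * ∏ j, K₁ (x j - y j)) ≤ r} := by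
  classical
  set s : Fin d → Set ℝ := fun j =>
    if x j + δ ≤ 1 then Set.Ico (x j) (x j + δ) else Set.Ioc (x j - δ) (x j) with hs
  have hxj : ∀ j, x j ∈ Set.Ico (0:ℝ) 1 := fun j => hx j (Set.mem_univ j)
  have hsub : ∀ j, s j ⊆ Set.Ico 0 1 := by
    intro j y hy
    have h1 := (hxj j).1; have h2 := (hxj j).2
    simp only [hs] at hy
    split_ifs at hy with h
    · exact ⟨le_trans h1 hy.1, lt_of_lt_of_le hy.2 h⟩
    · push_neg at h
      constructor
      · have h3 : (0:ℝ) ≤ x j - δ := by linarith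
        linarith [hy.1]
      · exact lt_of_le_of_lt hy.2 h2
  have hclose : ∀ j, ∀ y ∈ s j, |x j - y| ≤ δ := by
    intro j y hy
    simp only [hs] at hy
    split_ifs at hy with h
    · rw [abs_le]; constructor <;> [linarith [hy.2]; linarith [hy.1]]
    · rw [abs_le]; constructor <;> [linarith [hy.2]; linarith [hy.1]]
  have hmeas : ∀ j, volume.restrict (Set.Ico (0:ℝ) 1) (s j) = ENNReal.ofReal δ := by
    intro j
    have hms : MeasurableSet (s j) := by
      simp only [hs]; split_ifs
      exacts [measurableSet_Ico, measurableSet_Ioc]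
    rw [Measure.restrict_apply hms]
    rw [Set.inter_eq_left.mpr (hsub j)]
    simp only [hs]; split_ifs
    · rw [Real.volume_Ico]; ring_nf
    · rw [Real.volume_Ioc]; ring_nf
  -- the pi-set is contained in the ball
  have hpisub : (Set.univ.pi s) ⊆
      {y : Fin d → ℝ | Real.sqrt (2 - 2 * ∏ j, K₁ (x j - y j)) ≤ r} := by
    intro y hy
    have hu0 : 0 ≤ α * δ ^ p := by positivity
    have hu1 : (d:ℝ) * (α * δ ^ p) ≤ 1 := by
      nlinarith [min_le_right (r^2) (2:ℝ)]
    have hKj : ∀ j, 1 - α * δ ^ p ≤ K₁ (x j - y j) := by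
      intro j
      have h1 : torusDist (x j - y j) ≤ δ :=
        le_trans (torusDist_le_abs _) (hclose j _ (hy j (Set.mem_univ j)))
      have h2 : torusDist (x j - y j) ^ p ≤ δ ^ p :=
        Real.rpow_le_rpow (torusDist_nonneg _) h1 hp.le
      have h3 := hKlb (x j - y j) (le_trans h1 hδR)
      nlinarith
    have hdR : (1:ℝ) ≤ (d:ℝ) := by exact_mod_cast hd
    have hKnn : (0:ℝ) ≤ 1 - α * δ ^ p := by nlinarith
    have hprod : 1 - (d:ℝ) * (α * δ ^ p) ≤ ∏ j, K₁ (x j - y j) := by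
      have h1 : (1 - α * δ ^ p) ^ d ≤ ∏ j, K₁ (x j - y j) := by
        calc (1 - α * δ ^ p) ^ d = ∏ _j : Fin d, (1 - α * δ ^ p) := by
              rw [Finset.prod_const, Finset.card_univ, Fintype.card_fin]
          _ ≤ _ := Finset.prod_le_prod (fun i _ => hKnn) (fun i _ => hKj i)
      have h2 : 1 - (d:ℝ) * (α * δ ^ p) ≤ (1 - α * δ ^ p) ^ d := by
        have := one_add_mul_le_pow (a := -(α * δ ^ p)) (by nlinarith) d
        calc 1 - (d:ℝ) * (α * δ ^ p) = 1 + (d:ℝ) * (-(α * δ ^ p)) := by ring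
          _ ≤ (1 + -(α * δ ^ p)) ^ d := this
          _ = (1 - α * δ ^ p) ^ d := by ring_nf
      linarith
    show Real.sqrt (2 - 2 * ∏ j, K₁ (x j - y j)) ≤ r
    have h4 : 2 - 2 * ∏ j, K₁ (x j - y j) ≤ r ^ 2 := by
      have := min_le_left (r^2) (2:ℝ)
      nlinarith
    calc Real.sqrt (2 - 2 * ∏ j, K₁ (x j - y j)) ≤ Real.sqrt (r^2) :=
          Real.sqrt_le_sqrt h4
      _ = r := Real.sqrt_sq hr
  calc (ENNReal.ofReal δ) ^ d = ∏ _j : Fin d, ENNReal.ofReal δ := by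
        rw [Finset.prod_const, Finset.card_univ, Fintype.card_fin]
    _ = cubeMeasure d (Set.univ.pi s) := by
        rw [cubeMeasure, Measure.pi_pi]
        exact Finset.prod_congr rfl fun j _ => (hmeas j).symm
    _ ≤ _ := measure_mono hpisub

lemma delta_bounds (d : ℕ) (hd : 1 ≤ d) (p α R₀ r : ℝ) (hp : 0 < p)
    (hα : 0 < α) (hR : 0 < R₀) (hR2 : R₀ ≤ 1/2) (hr : 0 < r) :
    ∃ δ : ℝ, 0 < δ ∧ δ ≤ R₀ ∧ 2 * d * (α * δ ^ p) ≤ min (r^2) 2 ∧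
      -Real.log δ ≤ (-Real.log R₀) + p⁻¹ * max (Real.log (2*d*α)) 0
          + p⁻¹ * (2 * max (-Real.log r) 0) := by
  have hdR : (1:ℝ) ≤ (d:ℝ) := by exact_mod_cast hd
  have hm0 : (0:ℝ) < min (r^2) 2 := lt_min (by positivity) (by norm_num)
  have hda : (0:ℝ) < 2 * d * α := by positivity
  set b : ℝ := min (r^2) 2 / (2 * d * α) with hb
  have hb0 : 0 < b := div_pos hm0 hda
  set ε : ℝ := b ^ (p⁻¹ : ℝ) with hε
  have hε0 : 0 < ε := Real.rpow_pos_of_pos hb0 _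
  refine ⟨min R₀ ε, lt_min hR hε0, min_le_left _ _, ?_, ?_⟩
  · have h1 : (min R₀ ε) ^ p ≤ ε ^ p :=
      Real.rpow_le_rpow (le_min hR.le hε0.le) (min_le_right _ _) hp.le
    have h2 : ε ^ p = b := Real.rpow_inv_rpow hb0.le hp.ne'
    calc 2 * d * (α * (min R₀ ε) ^ p) ≤ 2 * d * (α * b) := by nlinarith
      _ = min (r^2) 2 := by rw [hb]; field_simp
  · have hlogε : -Real.log ε = p⁻¹ * (Real.log (2*d*α) - Real.log (min (r^2) 2)) := by
      rw [hε, Real.log_rpow hb0, hb, Real.log_div hm0.ne' hda.ne']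
      ring
    have hL3 : -Real.log (min (r^2) 2) ≤ 2 * max (-Real.log r) 0 := by
      rcases min_cases (r^2) 2 with ⟨h1, _⟩ | ⟨h1, _⟩
      · rw [h1, show r^2 = r^2 from rfl, Real.log_pow]
        push_cast
        have : -(2 * Real.log r) = 2 * (-Real.log r) := by ring
        rw [this]
        have := le_max_left (-Real.log r) 0
        nlinarith [le_max_left (-Real.log r) (0:ℝ)]
      · rw [h1]
        have : (0:ℝ) < Real.log 2 := Real.log_pos (by norm_num)
        nlinarith [le_max_right (-Real.log r) (0:ℝ)]
    have hεb : max 0 (-Real.log ε) ≤ p⁻¹ * max (Real.log (2*d*α)) 0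
        + p⁻¹ * (2 * max (-Real.log r) 0) := by
      apply max_le
      · have h1 := le_max_right (Real.log (2*d*α)) (0:ℝ)
        have h2 := le_max_right (-Real.log r) (0:ℝ)
        have hip : (0:ℝ) < p⁻¹ := by positivity
        nlinarith
      · rw [hlogε]
        have h1 := le_max_left (Real.log (2*d*α)) (0:ℝ)
        have hip : (0:ℝ) < p⁻¹ := by positivity
        nlinarith
    have hRlog : (0:ℝ) ≤ -Real.log R₀ := by
      have : Real.log R₀ ≤ 0 := Real.log_nonpos hR.le (by linarith)
      linarith
    rcases min_cases R₀ ε with ⟨h1, _⟩ | ⟨h1, h2⟩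
    · rw [h1]
      have := le_max_left (0:ℝ) (-Real.log ε)
      linarith [le_trans (le_max_left (0:ℝ) (-Real.log ε)) hεb]
    · rw [h1]
      have := le_trans (le_max_right (0:ℝ) (-Real.log ε)) hεb
      linarith

lemma sqrt_neg_log_le (r : ℝ) (hr : 0 < r) :
    Real.sqrt (max (-Real.log r) 0) ≤ Real.sqrt 2 * r ^ (-(4:ℝ)⁻¹) := by
  rcases le_or_gt 1 r with h|h
  · have h1 : max (-Real.log r) 0 = 0 := max_eq_right (by
      have := Real.log_nonneg h; linarith)
    rw [h1, Real.sqrt_zero]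
    positivity
  · have hlog : Real.log r < 0 := Real.log_neg hr h
    have h1 : max (-Real.log r) 0 = -Real.log r := max_eq_left (by linarith)
    rw [h1]
    have key : -Real.log r ≤ 2 * r ^ (-(2:ℝ)⁻¹) := by
      set y : ℝ := r ^ (-(2:ℝ)⁻¹) with hy
      have hy0 : 0 < y := Real.rpow_pos_of_pos hr _
      have hylog : Real.log y = -(2:ℝ)⁻¹ * Real.log r := Real.log_rpow hr _
      have := Real.log_le_sub_one_of_pos hy0
      nlinarith
    calc Real.sqrt (-Real.log r) ≤ Real.sqrt (2 * r ^ (-(2:ℝ)⁻¹)) := Real.sqrt_le_sqrt key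
      _ = Real.sqrt 2 * Real.sqrt (r ^ (-(2:ℝ)⁻¹)) := Real.sqrt_mul (by norm_num) _
      _ = Real.sqrt 2 * r ^ (-(4:ℝ)⁻¹) := by
          rw [Real.sqrt_eq_rpow (r ^ (-(2:ℝ)⁻¹)), ← Real.rpow_mul hr.le]
          norm_num

lemma g_bound (d : ℕ) (hd : 1 ≤ d) (p α R₀ : ℝ) (hp : 0 < p)
    (hα : 0 < α) (hR : 0 < R₀) (hR2 : R₀ ≤ 1/2)
    (K₁ : ℝ → ℝ)
    (hKlb : ∀ t, torusDist t ≤ R₀ → 1 - α * torusDist t ^ p ≤ K₁ t)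
    (r : ℝ) (hr : 0 < r)
    (x : Fin d → ℝ) (hx : x ∈ Set.univ.pi fun _ : Fin d => Set.Ico (0:ℝ) 1) :
    0 < (cubeMeasure d {y | Real.sqrt (2 - 2 * ∏ j, K₁ (x j - y j)) ≤ r}).toReal ∧
    (cubeMeasure d {y | Real.sqrt (2 - 2 * ∏ j, K₁ (x j - y j)) ≤ r}).toReal ≤ 1 ∧
    Real.sqrt (Real.log (1 /
        (cubeMeasure d {y | Real.sqrt (2 - 2 * ∏ j, K₁ (x j - y j)) ≤ r}).toReal)) ≤
      Real.sqrt ((d:ℝ) * ((-Real.log R₀) + p⁻¹ * max (Real.log (2*d*α)) 0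
          + p⁻¹ * (2 * max (-Real.log r) 0))) := by
  obtain ⟨δ, hδ0, hδR, hδr, hδlog⟩ := delta_bounds d hd p α R₀ r hp hα hR hR2 hr
  set B : Set (Fin d → ℝ) := {y | Real.sqrt (2 - 2 * ∏ j, K₁ (x j - y j)) ≤ r} with hB
  have hμlb := ball_measure_lb d hd p α R₀ hp hα hR hR2 K₁ hKlb x hx r δ hδR hδ0 hδr hr.le
  have hμfin : cubeMeasure d B ≠ ⊤ := by
    have h1 : cubeMeasure d B ≤ 1 := by
      rw [← cubeMeasure_univ d]; exact measure_mono (Set.subset_univ _)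
    exact ne_top_of_le_ne_top ENNReal.one_ne_top h1
  have h1 : δ ^ d ≤ (cubeMeasure d B).toReal := by
    calc δ ^ d = ((ENNReal.ofReal δ) ^ d).toReal := by
          rw [← ENNReal.ofReal_pow hδ0.le, ENNReal.toReal_ofReal (by positivity)]
      _ ≤ _ := ENNReal.toReal_mono hμfin hμlb
  have h2 : (cubeMeasure d B).toReal ≤ 1 := by
    have h3 : cubeMeasure d B ≤ 1 := by
      rw [← cubeMeasure_univ d]; exact measure_mono (Set.subset_univ _)
    calc (cubeMeasure d B).toReal ≤ (1:ℝ≥0∞).toReal :=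
          ENNReal.toReal_mono ENNReal.one_ne_top h3
      _ = 1 := ENNReal.toReal_one
  have hm0 : 0 < (cubeMeasure d B).toReal := lt_of_lt_of_le (by positivity) h1
  refine ⟨hm0, h2, ?_⟩
  apply Real.sqrt_le_sqrt
  have hlog1 : Real.log (1 / (cubeMeasure d B).toReal) = -Real.log ((cubeMeasure d B).toReal) := by
    rw [one_div, Real.log_inv]
  rw [hlog1]
  have hlog2 : Real.log (δ ^ d) ≤ Real.log ((cubeMeasure d B).toReal) :=
    Real.log_le_log (by positivity) h1
  rw [Real.log_pow] at hlog2
  have hdR : (0:ℝ) ≤ (d:ℝ) := Nat.cast_nonneg d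
  nlinarith

/-- Entropy-integral estimate for tensor-product kernels on
the torus: if the `1`-periodic even kernel `K₁` satisfies `K₁(0) = 1`,
`|K₁| ≤ 1` and the local lower bound `K₁(t) ≥ 1 − α d_𝕋(t)^p` for
`d_𝕋(t) ≤ R₀`, then for the canonical pseudometric
`ρ(x,y) = √(2 − 2 ∏_j K₁(x_j − y_j))` on `[0,1)^d`,
`∫₀^∞ sup_x √(log(1/μ(B_ρ(x,r)))) dr ≤ C(p) √(d(1+log d)) (1+√α+√(−log 2R₀))`. -/
theorem stmt10 (p : ℝ) (hp : p ∈ Set.Ioc (0 : ℝ) 1) :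
    ∃ C : ℝ, 0 < C ∧
      ∀ (d : ℕ), 1 ≤ d → ∀ α : ℝ, 0 < α → ∀ R₀ : ℝ, R₀ ∈ Set.Ioc (0 : ℝ) (1/2) →
      ∀ K₁ : ℝ → ℝ, Function.Periodic K₁ 1 → (∀ t, K₁ (-t) = K₁ t) →
        K₁ 0 = 1 → (∀ t, |K₁ t| ≤ 1) →
        (∀ t, torusDist t ≤ R₀ → 1 - α * torusDist t ^ p ≤ K₁ t) →
        (∫ r in Set.Ioi (0 : ℝ),
            ⨆ x ∈ Set.univ.pi fun _ : Fin d => Set.Ico (0 : ℝ) 1,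
              Real.sqrt (Real.log (1 /
                (cubeMeasure d
                  {y | Real.sqrt (2 - 2 * ∏ j, K₁ (x j - y j)) ≤ r}).toReal)))
          ≤ C * Real.sqrt (d * (1 + Real.log d)) *
              (1 + Real.sqrt α + Real.sqrt (-Real.log (2 * R₀))) := by
  obtain ⟨hp0, hp1⟩ := hp
  refine ⟨100 * (1 + p⁻¹), by positivity, ?_⟩
  intro d hd α hα R₀ hR₀ K₁ _hper _heven _hK0 hKle hKlb
  obtain ⟨hR, hR2⟩ := hR₀
  have hdR : (1:ℝ) ≤ (d:ℝ) := by exact_mod_cast hd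
  set S : Set (Fin d → ℝ) := Set.univ.pi fun _ : Fin d => Set.Ico (0:ℝ) 1 with hS
  set g : ℝ → (Fin d → ℝ) → ℝ := fun r x =>
    Real.sqrt (Real.log (1 /
      (cubeMeasure d {y | Real.sqrt (2 - 2 * ∏ j, K₁ (x j - y j)) ≤ r}).toReal)) with hg
  set f : ℝ → ℝ := fun r => ⨆ x ∈ S, g r x with hf
  set L1 : ℝ := -Real.log R₀ with hL1
  set L2 : ℝ := max (Real.log (2*d*α)) 0 with hL2
  set M : ℝ → ℝ := fun r =>
    Real.sqrt ((d:ℝ) * (L1 + p⁻¹ * L2 + p⁻¹ * (2 * max (-Real.log r) 0))) with hM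
  set A : ℝ := Real.sqrt ((d:ℝ) * L1) + Real.sqrt ((d:ℝ) * p⁻¹ * L2) with hA
  set Bc : ℝ := Real.sqrt (2 * d * p⁻¹) * Real.sqrt 2 with hBc
  -- basic facts about g
  have hgM : ∀ r, 0 < r → ∀ x ∈ S, g r x ≤ M r := by
    intro r hr x hx
    exact (g_bound d hd p α R₀ hp0 hα hR hR2 K₁ hKlb r hr x hx).2.2
  have hg0 : ∀ r x, 0 ≤ g r x := fun r x => Real.sqrt_nonneg _
  have hBdd : ∀ r, 0 < r → BddAbove (Set.range fun x => ⨆ _ : x ∈ S, g r x) := by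
    intro r hr
    refine ⟨max (M r) 0, ?_⟩
    rintro v ⟨x, rfl⟩
    dsimp only
    by_cases hx : x ∈ S
    · rw [ciSup_pos hx]; exact le_trans (hgM r hr x hx) (le_max_left _ _)
    · haveI : IsEmpty (x ∈ S) := ⟨hx⟩
      rw [Real.iSup_of_isEmpty]; exact le_max_right _ _
  have hsup_le : ∀ (r : ℝ) (c : ℝ), 0 ≤ c → (∀ x ∈ S, g r x ≤ c) → f r ≤ c := by
    intro r c hc h
    refine Real.iSup_le (fun x => ?_) hc
    by_cases hx : x ∈ S
    · rw [ciSup_pos hx]; exact h x hx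
    · haveI : IsEmpty (x ∈ S) := ⟨hx⟩
      rw [Real.iSup_of_isEmpty]; exact hc
  have hle_sup : ∀ (r : ℝ), 0 < r → ∀ x ∈ S, g r x ≤ f r := by
    intro r hr x hx
    have h := le_ciSup (hBdd r hr) x
    rwa [ciSup_pos hx] at h
  have hfM : ∀ r, 0 < r → f r ≤ M r := fun r hr =>
    hsup_le r (M r) (Real.sqrt_nonneg _) (hgM r hr)
  have hx₀ : (fun _ : Fin d => (0:ℝ)) ∈ S := by
    intro j _; exact ⟨le_rfl, by norm_num⟩
  have hf0 : ∀ r, 0 < r → 0 ≤ f r := fun r hr =>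
    le_trans (hg0 r _) (hle_sup r hr _ hx₀)
  -- antitonicity
  have hganti : ∀ r r', 0 < r → r ≤ r' → ∀ x ∈ S, g r' x ≤ g r x := by
    intro r r' hr hrr x hx
    have hm0 := (g_bound d hd p α R₀ hp0 hα hR hR2 K₁ hKlb r hr x hx).1
    have hsub : {y : Fin d → ℝ | Real.sqrt (2 - 2 * ∏ j, K₁ (x j - y j)) ≤ r} ⊆
        {y | Real.sqrt (2 - 2 * ∏ j, K₁ (x j - y j)) ≤ r'} :=
      fun y hy => le_trans hy hrr
    have hfin : cubeMeasure d {y | Real.sqrt (2 - 2 * ∏ j, K₁ (x j - y j)) ≤ r'} ≠ ⊤ := by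
      have h1 : cubeMeasure d {y | Real.sqrt (2 - 2 * ∏ j, K₁ (x j - y j)) ≤ r'} ≤ 1 := by
        rw [← cubeMeasure_univ d]; exact measure_mono (Set.subset_univ _)
      exact ne_top_of_le_ne_top ENNReal.one_ne_top h1
    have hmm : (cubeMeasure d {y | Real.sqrt (2 - 2 * ∏ j, K₁ (x j - y j)) ≤ r}).toReal ≤
        (cubeMeasure d {y | Real.sqrt (2 - 2 * ∏ j, K₁ (x j - y j)) ≤ r'}).toReal :=
      ENNReal.toReal_mono hfin (measure_mono hsub)
    have hm0' := (g_bound d hd p α R₀ hp0 hα hR hR2 K₁ hKlb r' (lt_of_lt_of_le hr hrr) x hx).1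
    apply Real.sqrt_le_sqrt
    apply Real.log_le_log (one_div_pos.mpr hm0')
    exact one_div_le_one_div_of_le hm0 hmm
  have hfanti : ∀ r r', 0 < r → r ≤ r' → f r' ≤ f r := by
    intro r r' hr hrr
    refine hsup_le r' (f r) (hf0 r hr) ?_
    intro x hx
    exact le_trans (hganti r r' hr hrr x hx) (hle_sup r hr x hx)
  -- vanishing for r > 2
  have hf2 : ∀ r, 2 < r → f r = 0 := by
    intro r hr2
    have hgz : ∀ x : Fin d → ℝ, g r x = 0 := by
      intro x
      have huniv : {y : Fin d → ℝ | Real.sqrt (2 - 2 * ∏ j, K₁ (x j - y j)) ≤ r} =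
          Set.univ := by
        apply Set.eq_univ_of_forall
        intro y
        have habs : |∏ j, K₁ (x j - y j)| ≤ 1 := by
          rw [Finset.abs_prod]
          exact Finset.prod_le_one (fun i _ => abs_nonneg _) (fun i _ => hKle _)
        have h4 : 2 - 2 * ∏ j, K₁ (x j - y j) ≤ 4 := by
          have := abs_le.mp habs; nlinarith [this.1]
        show Real.sqrt (2 - 2 * ∏ j, K₁ (x j - y j)) ≤ r
        calc Real.sqrt (2 - 2 * ∏ j, K₁ (x j - y j)) ≤ Real.sqrt 4 := Real.sqrt_le_sqrt h4
          _ = 2 := by rw [show (4:ℝ) = 2^2 by norm_num, Real.sqrt_sq (by norm_num)]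
          _ ≤ r := hr2.le
      rw [hg]
      simp only [huniv, cubeMeasure_univ, ENNReal.toReal_one]
      norm_num
    apply le_antisymm
    · exact hsup_le r 0 le_rfl (fun x hx => (hgz x).le)
    · exact hf0 r (by linarith)
  -- measurability
  have hF : Antitone (fun t => f (Real.exp t)) := fun t t' h =>
    hfanti _ _ (Real.exp_pos t) (Real.exp_le_exp.mpr h)
  have hfaesm : AEStronglyMeasurable f (volume.restrict (Set.Ioi (0:ℝ))) := by
    have h1 : (fun r => f (Real.exp (Real.log r))) =ᵐ[volume.restrict (Set.Ioi (0:ℝ))] f := by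
      refine (ae_restrict_iff' measurableSet_Ioi).mpr (ae_of_all _ fun r hr => ?_)
      show f (Real.exp (Real.log r)) = f r
      rw [Real.exp_log hr]
    exact ((hF.measurable.comp Real.measurable_log).aestronglyMeasurable).congr h1
  -- the majorant
  set G : ℝ → ℝ := Set.indicator (Set.Ioc (0:ℝ) 2)
    (fun r => A + Bc * r ^ (-(4:ℝ)⁻¹)) with hG
  have hA0 : 0 ≤ A := by positivity
  have hB0 : 0 ≤ Bc := by positivity
  have hG0 : ∀ r, 0 ≤ G r := by
    intro r
    apply Set.indicator_nonneg
    intro t ht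
    exact add_nonneg hA0 (mul_nonneg hB0 (Real.rpow_nonneg ht.1.le _))
  have hfG : ∀ r ∈ Set.Ioi (0:ℝ), f r ≤ G r := by
    intro r hr
    rcases le_or_gt r 2 with h2|h2
    · rw [hG, Set.indicator_of_mem (Set.mem_Ioc.mpr ⟨Set.mem_Ioi.mp hr, h2⟩)]
      calc f r ≤ M r := hfM r hr
        _ ≤ A + Bc * r ^ (-(4:ℝ)⁻¹) := by
          simp only [hM]
          have e1 : (d:ℝ) * (L1 + p⁻¹ * L2 + p⁻¹ * (2 * max (-Real.log r) 0))
              = (d:ℝ)*L1 + ((d:ℝ)*p⁻¹*L2 + 2*(d:ℝ)*p⁻¹ * max (-Real.log r) 0) := by ring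
          rw [e1]
          calc Real.sqrt ((d:ℝ)*L1 + ((d:ℝ)*p⁻¹*L2 + 2*(d:ℝ)*p⁻¹ * max (-Real.log r) 0))
              ≤ Real.sqrt ((d:ℝ)*L1) +
                Real.sqrt ((d:ℝ)*p⁻¹*L2 + 2*(d:ℝ)*p⁻¹ * max (-Real.log r) 0) :=
                my_sqrt_add_le _ _
            _ ≤ Real.sqrt ((d:ℝ)*L1) + (Real.sqrt ((d:ℝ)*p⁻¹*L2) +
                Real.sqrt (2*(d:ℝ)*p⁻¹ * max (-Real.log r) 0)) := by
                have := my_sqrt_add_le ((d:ℝ)*p⁻¹*L2) (2*(d:ℝ)*p⁻¹ * max (-Real.log r) 0)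
                linarith
            _ ≤ Real.sqrt ((d:ℝ)*L1) + Real.sqrt ((d:ℝ)*p⁻¹*L2) + Bc * r ^ (-(4:ℝ)⁻¹) := by
                have e2 : Real.sqrt (2*(d:ℝ)*p⁻¹ * max (-Real.log r) 0)
                    = Real.sqrt (2*(d:ℝ)*p⁻¹) * Real.sqrt (max (-Real.log r) 0) :=
                  Real.sqrt_mul (by positivity) _
                have e3 : Real.sqrt (max (-Real.log r) 0) ≤ Real.sqrt 2 * r ^ (-(4:ℝ)⁻¹) :=
                  sqrt_neg_log_le r hr
                have e4 : Real.sqrt (2*(d:ℝ)*p⁻¹) * Real.sqrt (max (-Real.log r) 0)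
                    ≤ Real.sqrt (2*(d:ℝ)*p⁻¹) * (Real.sqrt 2 * r ^ (-(4:ℝ)⁻¹)) :=
                  mul_le_mul_of_nonneg_left e3 (Real.sqrt_nonneg _)
                rw [hBc]
                nlinarith [Real.sqrt_nonneg (2*(d:ℝ)*p⁻¹), Real.sqrt_nonneg (2:ℝ)]
    · have hnot : r ∉ Set.Ioc (0:ℝ) 2 := fun hmem => absurd hmem.2 (not_le.mpr h2)
      rw [hG, Set.indicator_of_notMem hnot, hf2 r h2]
  -- integrability
  have hrpow_int : IntegrableOn (fun r : ℝ => r ^ (-(4:ℝ)⁻¹)) (Set.Ioc (0:ℝ) 2) volume :=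
    (intervalIntegrable_iff_integrableOn_Ioc_of_le (by norm_num)).mp
      (intervalIntegral.intervalIntegrable_rpow' (by norm_num))
  have hconst_int : IntegrableOn (fun _ : ℝ => A) (Set.Ioc (0:ℝ) 2) volume :=
    integrableOn_const (by rw [Real.volume_Ioc]; exact ENNReal.ofReal_ne_top)
  have hinner_int : IntegrableOn (fun r : ℝ => A + Bc * r ^ (-(4:ℝ)⁻¹))
      (Set.Ioc (0:ℝ) 2) volume := hconst_int.add (hrpow_int.const_mul Bc)
  have hGint : Integrable G (volume.restrict (Set.Ioi (0:ℝ))) := by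
    have h4 : Integrable G volume :=
      (integrable_indicator_iff measurableSet_Ioc).mpr hinner_int
    exact h4.integrableOn
  have hfint : Integrable f (volume.restrict (Set.Ioi (0:ℝ))) := by
    apply Integrable.mono hGint hfaesm
    refine (ae_restrict_iff' measurableSet_Ioi).mpr (ae_of_all _ fun r hr => ?_)
    rw [Real.norm_eq_abs, Real.norm_eq_abs, abs_of_nonneg (hf0 r hr), abs_of_nonneg (hG0 r)]
    exact hfG r hr
  -- the integral bound
  have step1 : (∫ r in Set.Ioi (0:ℝ), f r) ≤ ∫ r in Set.Ioi (0:ℝ), G r :=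
    integral_mono_ae hfint hGint
      ((ae_restrict_iff' measurableSet_Ioi).mpr (ae_of_all _ hfG))
  have step2 : (∫ r in Set.Ioi (0:ℝ), G r)
      = ∫ r in Set.Ioc (0:ℝ) 2, (A + Bc * r ^ (-(4:ℝ)⁻¹)) := by
    rw [hG, integral_indicator measurableSet_Ioc,
      Measure.restrict_restrict measurableSet_Ioc,
      Set.inter_eq_left.mpr Set.Ioc_subset_Ioi_self]
  have hIval : (∫ r in Set.Ioc (0:ℝ) 2, r ^ (-(4:ℝ)⁻¹)) ≤ 3 := by
    rw [← intervalIntegral.integral_of_le (by norm_num : (0:ℝ) ≤ 2)]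
    rw [integral_rpow (Or.inl (by norm_num))]
    have h0p : (0:ℝ) ^ (-(4:ℝ)⁻¹ + 1) = 0 := Real.zero_rpow (by norm_num)
    have h2p : (2:ℝ) ^ (-(4:ℝ)⁻¹ + 1) ≤ 2 := by
      calc (2:ℝ) ^ (-(4:ℝ)⁻¹ + 1) ≤ (2:ℝ) ^ (1:ℝ) :=
            Real.rpow_le_rpow_of_exponent_le (by norm_num) (by norm_num)
        _ = 2 := Real.rpow_one 2
    rw [h0p]
    have : (0:ℝ) < -(4:ℝ)⁻¹ + 1 := by norm_num
    rw [div_le_iff₀ this]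
    norm_num
    linarith
  have step3 : (∫ r in Set.Ioc (0:ℝ) 2, (A + Bc * r ^ (-(4:ℝ)⁻¹))) ≤ 2*A + 3*Bc := by
    rw [integral_add hconst_int (hrpow_int.const_mul Bc), integral_const,
      integral_const_mul]
    rw [measureReal_def, Measure.restrict_apply_univ, Real.volume_Ioc]
    rw [ENNReal.toReal_ofReal (by norm_num)]
    have h5 : Bc * (∫ r in Set.Ioc (0:ℝ) 2, r ^ (-(4:ℝ)⁻¹)) ≤ Bc * 3 :=
      mul_le_mul_of_nonneg_left hIval hB0
    rw [smul_eq_mul]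
    norm_num
    linarith
  -- final arithmetic
  set D : ℝ := Real.sqrt ((d:ℝ) * (1 + Real.log (d:ℝ))) with hD
  set T : ℝ := 1 + Real.sqrt α + Real.sqrt (-Real.log (2 * R₀)) with hT
  have hlogd : 0 ≤ Real.log (d:ℝ) := Real.log_nonneg hdR
  have hD0 : 0 ≤ D := Real.sqrt_nonneg _
  have hT1 : 1 ≤ T := by
    rw [hT]
    nlinarith [Real.sqrt_nonneg α, Real.sqrt_nonneg (-Real.log (2*R₀))]
  have hd0' : (0:ℝ) ≤ (d:ℝ) := by linarith
  have hsd : Real.sqrt (d:ℝ) ≤ D := Real.sqrt_le_sqrt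
    (by nlinarith [mul_nonneg hd0' hlogd])
  have hlog2R : 0 ≤ -Real.log (2*R₀) := by
    have h : Real.log (2*R₀) ≤ 0 := Real.log_nonpos (by linarith) (by linarith)
    linarith
  have hlogR₀ : L1 = Real.log 2 + (-Real.log (2*R₀)) := by
    rw [hL1]
    have := Real.log_mul (two_ne_zero) hR.ne'
    linarith [this]
  have hlog2 : Real.log 2 ≤ 1 := by
    have := Real.log_le_sub_one_of_pos (by norm_num : (0:ℝ) < 2); linarith
  have hq1 : (1:ℝ) ≤ p⁻¹ := by
    have h := mul_inv_cancel₀ hp0.ne'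
    have hip : (0:ℝ) < p⁻¹ := by positivity
    nlinarith
  have hsqp : Real.sqrt p⁻¹ ≤ p⁻¹ := by
    calc Real.sqrt p⁻¹ ≤ Real.sqrt ((p⁻¹)^2) := Real.sqrt_le_sqrt (by nlinarith)
      _ = p⁻¹ := Real.sqrt_sq (by positivity)
  have hi : Real.sqrt ((d:ℝ)*L1) ≤ D * T := by
    have e0 : (d:ℝ)*L1 = (d:ℝ)*Real.log 2 + (d:ℝ)*(-Real.log (2*R₀)) := by
      rw [hlogR₀]; ring
    rw [e0]
    calc Real.sqrt ((d:ℝ)*Real.log 2 + (d:ℝ)*(-Real.log (2*R₀)))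
        ≤ Real.sqrt ((d:ℝ)*Real.log 2) + Real.sqrt ((d:ℝ)*(-Real.log (2*R₀))) :=
          my_sqrt_add_le _ _
      _ = Real.sqrt (d:ℝ) * Real.sqrt (Real.log 2) +
          Real.sqrt (d:ℝ) * Real.sqrt (-Real.log (2*R₀)) := by
          rw [Real.sqrt_mul (by positivity), Real.sqrt_mul (by positivity)]
      _ ≤ D * T := by
          have h1 : Real.sqrt (Real.log 2) ≤ 1 := by
            calc Real.sqrt (Real.log 2) ≤ Real.sqrt 1 := Real.sqrt_le_sqrt hlog2
              _ = 1 := Real.sqrt_one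
          have h2 := Real.sqrt_nonneg (d:ℝ)
          have h3 := Real.sqrt_nonneg (-Real.log (2*R₀))
          have h5 := Real.sqrt_nonneg α
          have h6 : Real.sqrt (d:ℝ) * Real.sqrt (Real.log 2) ≤ Real.sqrt (d:ℝ) * 1 :=
            mul_le_mul_of_nonneg_left h1 h2
          have h7 : Real.sqrt (d:ℝ) * Real.sqrt (-Real.log (2*R₀))
              ≤ D * Real.sqrt (-Real.log (2*R₀)) :=
            mul_le_mul_of_nonneg_right hsd h3
          have h8 : 0 ≤ D * Real.sqrt α := mul_nonneg hD0 h5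
          have e9 : D * T = D + D * Real.sqrt α + D * Real.sqrt (-Real.log (2*R₀)) := by
            rw [hT]; ring
          linarith
  have hL2le : L2 ≤ (1 + Real.log (d:ℝ)) + α := by
    rw [hL2]
    apply max_le
    · have e : Real.log (2*(d:ℝ)*α) = Real.log 2 + Real.log (d:ℝ) + Real.log α := by
        rw [Real.log_mul (by positivity) hα.ne', Real.log_mul (two_ne_zero) (by positivity)]
      have hlogα : Real.log α ≤ α := by
        have := Real.log_le_sub_one_of_pos hα; linarith
      rw [e]; linarith
    · linarith
  have hii : Real.sqrt ((d:ℝ)*p⁻¹*L2) ≤ Real.sqrt p⁻¹ * (D * T) := by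
    have hip : (0:ℝ) < p⁻¹ := by positivity
    calc Real.sqrt ((d:ℝ)*p⁻¹*L2)
        ≤ Real.sqrt (p⁻¹ * ((d:ℝ)*(1+Real.log (d:ℝ)) + (d:ℝ)*α)) :=
          Real.sqrt_le_sqrt (by
            have hkey : ((d:ℝ)*p⁻¹) * L2 ≤ ((d:ℝ)*p⁻¹) * ((1 + Real.log (d:ℝ)) + α) :=
              mul_le_mul_of_nonneg_left hL2le (by positivity)
            nlinarith [hkey])
      _ = Real.sqrt p⁻¹ * Real.sqrt ((d:ℝ)*(1+Real.log (d:ℝ)) + (d:ℝ)*α) :=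
          Real.sqrt_mul (by positivity) _
      _ ≤ Real.sqrt p⁻¹ * (Real.sqrt ((d:ℝ)*(1+Real.log (d:ℝ))) + Real.sqrt ((d:ℝ)*α)) :=
          mul_le_mul_of_nonneg_left (my_sqrt_add_le _ _) (Real.sqrt_nonneg _)
      _ = Real.sqrt p⁻¹ * (D + Real.sqrt (d:ℝ) * Real.sqrt α) := by
          rw [← hD, Real.sqrt_mul (show (0:ℝ) ≤ (d:ℝ) from by positivity) α]
      _ ≤ Real.sqrt p⁻¹ * (D * T) := by
          apply mul_le_mul_of_nonneg_left _ (Real.sqrt_nonneg _)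
          have h1 : Real.sqrt (d:ℝ) * Real.sqrt α ≤ D * Real.sqrt α :=
            mul_le_mul_of_nonneg_right hsd (Real.sqrt_nonneg α)
          have h2 : 0 ≤ D * Real.sqrt (-Real.log (2*R₀)) :=
            mul_nonneg hD0 (Real.sqrt_nonneg _)
          have e9 : D * T = D + D * Real.sqrt α + D * Real.sqrt (-Real.log (2*R₀)) := by
            rw [hT]; ring
          linarith
  have hiii : Bc ≤ 2 * (Real.sqrt p⁻¹ * D) := by
    have e1 : Bc = Real.sqrt (2*(d:ℝ)*p⁻¹*2) := by
      rw [hBc, Real.sqrt_mul (by positivity) 2]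
    have e2 : (2*(d:ℝ)*p⁻¹*2) = 4*((d:ℝ)*p⁻¹) := by ring
    have e3 : Real.sqrt (4*((d:ℝ)*p⁻¹)) = 2 * Real.sqrt ((d:ℝ)*p⁻¹) := by
      rw [Real.sqrt_mul (by norm_num) _, show (4:ℝ) = 2^2 by norm_num,
        Real.sqrt_sq (by norm_num)]
    rw [e1, e2, e3, Real.sqrt_mul (by positivity : (0:ℝ) ≤ (d:ℝ))]
    have h1 : Real.sqrt (d:ℝ) * Real.sqrt p⁻¹ ≤ D * Real.sqrt p⁻¹ :=
      mul_le_mul_of_nonneg_right hsd (Real.sqrt_nonneg _)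
    nlinarith
  have hfinal : 2*A + 3*Bc ≤ (100 * (1 + p⁻¹)) * D * T := by
    clear_value A Bc D T L1 L2
    have hDT : 0 ≤ D * T := mul_nonneg hD0 (by linarith)
    have hA_le : A ≤ D * T + Real.sqrt p⁻¹ * (D * T) := by
      rw [hA]; exact add_le_add hi hii
    have hB_le : Bc ≤ 2 * (Real.sqrt p⁻¹ * (D * T)) := by
      have hDDT : D ≤ D * T := by
        nlinarith [mul_nonneg hD0 (show (0:ℝ) ≤ T - 1 from by linarith)]
      have h2 : Real.sqrt p⁻¹ * D ≤ Real.sqrt p⁻¹ * (D * T) :=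
        mul_le_mul_of_nonneg_left hDDT (Real.sqrt_nonneg p⁻¹)
      linarith
    have hqDT : Real.sqrt p⁻¹ * (D * T) ≤ p⁻¹ * (D * T) :=
      mul_le_mul_of_nonneg_right hsqp hDT
    have hq0 : 0 ≤ p⁻¹ * (D * T) := mul_nonneg (by linarith) hDT
    have e10 : (100 * (1 + p⁻¹)) * D * T = 100 * (D * T) + 100 * (p⁻¹ * (D * T)) := by
      ring
    linarith
  -- conclude
  calc (∫ r in Set.Ioi (0:ℝ), f r) ≤ ∫ r in Set.Ioi (0:ℝ), G r := step1
    _ = ∫ r in Set.Ioc (0:ℝ) 2, (A + Bc * r ^ (-(4:ℝ)⁻¹)) := step2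
    _ ≤ 2*A + 3*Bc := step3
    _ ≤ (100 * (1 + p⁻¹)) * D * T := hfinal
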